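/- For every partition λ with at most n parts (λ_1 ≥ λ_2 ≥ … ≥ λ_n ≥ 0) there exists a unique symmetric polynomial s_λ ∈ P such that s_λ · a_ρ = a_{λ+ρ}, where ρ = (n−1, n−2, …, 1, 0) and λ+ρ = (λ_1+n−1, λ_2+n−2, …, λ_n). Moreover the family (s_λ), indexed by all such partitions λ, is an R-basis of the R-module of symmetric polynomials in P. -/

import Mathlib

/- R = ℤ[t₁, t₂, …] with tₖ encoded as `MvPolynomial.X (k-1)`, i.e. 0-indexed;
   P = R[x₁, …, xₙ] = MvPolynomial (Fin n) R. -/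

open MvPolynomial

noncomputable section

abbrev R : Type := MvPolynomial ℕ ℤ

abbrev P (n : ℕ) : Type := MvPolynomial (Fin n) R

/-- The double monomial `(x_i | t)^k = (x_i + t₁) ⋯ (x_i + tₖ)`. -/
def dm (n : ℕ) (i : Fin n) (k : ℕ) : P n :=
  ∏ j ∈ Finset.range k, (X i + C (MvPolynomial.X j : R))

/-- `a_ν = Σ_{σ ∈ S_n} sgn(σ) Π_i (x_{σ(i)} | t)^{ν_i}`. -/
def aPoly (n : ℕ) (ν : Fin n → ℕ) : P n :=
  ∑ σ : Equiv.Perm (Fin n), (Equiv.Perm.sign σ : ℤ) • ∏ i : Fin n, dm n (σ i) (ν i)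

/-- `ρ = (n-1, n-2, …, 1, 0)`. -/
def rho (n : ℕ) : Fin n → ℕ := fun i => n - 1 - (i : ℕ)

/-- `Λₙ`, the `R`-submodule of symmetric polynomials of `P`. -/
def SymmSub (n : ℕ) : Submodule R (P n) :=
  Subalgebra.toSubmodule (symmetricSubalgebra (Fin n) R)

namespace Schur

open Equiv Finset

variable {n : ℕ}

/-- generic alternating sum -/
def altSum (n : ℕ) (g : Fin n → ℕ → P n) (ν : Fin n → ℕ) : P n :=
  ∑ σ : Equiv.Perm (Fin n), (Equiv.Perm.sign σ : ℤ) • ∏ i : Fin n, g (σ i) (ν i)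

lemma aPoly_eq (ν : Fin n → ℕ) : aPoly n ν = altSum n (dm n) ν := rfl

def mAlt (n : ℕ) (ν : Fin n → ℕ) : P n := altSum n (fun i k => (X i : P n) ^ k) ν

lemma altSum_comp_perm (g : Fin n → ℕ → P n) (ν : Fin n → ℕ) (τ : Perm (Fin n)) :
    altSum n g (ν ∘ τ) = (Equiv.Perm.sign τ : ℤ) • altSum n g ν := by
  unfold altSum
  rw [Finset.smul_sum]
  apply Fintype.sum_equiv (Equiv.mulRight τ⁻¹)
  intro σ
  simp only [Equiv.coe_mulRight]
  rw [smul_smul]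
  have hprod : ∏ i : Fin n, g (σ i) ((ν ∘ τ) i) = ∏ i : Fin n, g ((σ * τ⁻¹) i) (ν i) := by
    apply Fintype.prod_equiv τ
    intro i
    simp [Equiv.Perm.mul_apply]
  rw [hprod]
  congr 1
  rw [Equiv.Perm.sign_mul, Equiv.Perm.sign_inv]
  rcases Int.units_eq_one_or (Equiv.Perm.sign τ) with h | h <;> simp [h]

lemma altSum_eq_zero_of_not_injective (g : Fin n → ℕ → P n) (ν : Fin n → ℕ)
    (h : ¬ Function.Injective ν) : altSum n g ν = 0 := by
  simp only [Function.Injective, not_forall] at h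
  obtain ⟨i, j, hν, hij⟩ := h
  have hswap : ν ∘ (Equiv.swap i j) = ν := by
    funext k
    rcases eq_or_ne k i with rfl | hki
    · simp [Equiv.swap_apply_left, hν.symm]
    rcases eq_or_ne k j with rfl | hkj
    · simp [Equiv.swap_apply_right, hν]
    · simp [Function.comp, Equiv.swap_apply_of_ne_of_ne hki hkj]
  have key : altSum n g ν = - altSum n g ν := by
    conv_lhs => rw [← hswap, altSum_comp_perm]
    rw [Equiv.Perm.sign_swap hij]
    simp
  have h2 : (2 : P n) * altSum n g ν = 0 := by
    rw [two_mul]; nth_rewrite 1 [key]; ring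
  rcases mul_eq_zero.mp h2 with h | h
  · exact absurd h two_ne_zero
  · exact h

lemma rename_altSum (g : Fin n → ℕ → P n) (ν : Fin n → ℕ) (τ : Perm (Fin n))
    (hg : ∀ i k, rename (⇑τ) (g i k) = g (τ i) k) :
    rename (⇑τ) (altSum n g ν) = (Equiv.Perm.sign τ : ℤ) • altSum n g ν := by
  unfold altSum
  rw [map_sum, Finset.smul_sum]
  apply Fintype.sum_equiv (Equiv.mulLeft τ)
  intro σ
  simp only [Equiv.coe_mulLeft]
  rw [map_zsmul, map_prod, smul_smul]
  have : ∀ i : Fin n, rename (⇑τ) (g (σ i) (ν i)) = g ((τ * σ) i) (ν i) := by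
    intro i
    rw [hg]
    simp [Equiv.Perm.mul_apply]
  rw [Finset.prod_congr rfl fun i _ => this i]
  congr 1
  rw [Equiv.Perm.sign_mul]
  rcases Int.units_eq_one_or (Equiv.Perm.sign τ) with h | h <;> simp [h]

def IsAlt {n : ℕ} (f : P n) : Prop :=
  ∀ σ : Perm (Fin n), rename (⇑σ) f = (Equiv.Perm.sign σ : ℤ) • f

lemma rename_dm (τ : Perm (Fin n)) (i : Fin n) (k : ℕ) :
    rename (⇑τ) (dm n i k) = dm n (τ i) k := by
  unfold dm
  rw [map_prod]
  simp

lemma isAlt_aPoly (ν : Fin n → ℕ) : IsAlt (aPoly n ν) := fun τ =>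
  rename_altSum _ _ τ (fun i k => rename_dm τ i k)

lemma isAlt_mAlt (ν : Fin n → ℕ) : IsAlt (mAlt n ν) := fun τ =>
  rename_altSum _ _ τ (fun i k => by simp)

lemma IsAlt.sub {f g : P n} (hf : IsAlt f) (hg : IsAlt g) : IsAlt (f - g) := by
  intro σ; rw [map_sub, hf σ, hg σ, smul_sub]

lemma IsAlt.symm_mul {s f : P n} (hs : s.IsSymmetric) (hf : IsAlt f) : IsAlt (s * f) := by
  intro σ; rw [map_mul, hs σ, hf σ, mul_smul_comm]

lemma IsAlt.smul {f : P n} (c : R) (hf : IsAlt f) : IsAlt (c • f) := by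
  intro σ
  rw [smul_comm]
  rw [← hf σ]
  simp [MvPolynomial.smul_eq_C_mul, map_mul]



/-- `D ν` is `ν` as a finsupp. -/
def D {n : ℕ} (ν : Fin n → ℕ) : Fin n →₀ ℕ := Finsupp.equivFunOnFinite.symm ν

@[simp] lemma D_apply (ν : Fin n → ℕ) (j : Fin n) : D ν j = ν j := rfl

lemma D_injective : Function.Injective (D (n := n)) := Finsupp.equivFunOnFinite.symm.injective

lemma monomial_sum_one {ι : Type*} (s : Finset ι) (d : ι → (Fin n →₀ ℕ)) :
    (monomial (∑ i ∈ s, d i) (1 : R) : P n) = ∏ i ∈ s, monomial (d i) 1 := by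
  induction s using Finset.cons_induction with
  | empty => simp [monomial_eq]
  | cons a s ha ih => rw [Finset.sum_cons, Finset.prod_cons, ← ih, monomial_mul, one_mul]

lemma sum_single_eq_D (σ : Perm (Fin n)) (ν : Fin n → ℕ) :
    ∑ i : Fin n, Finsupp.single (σ i) (ν i) = D (ν ∘ ⇑σ.symm) := by
  ext j
  rw [Finset.sum_apply']
  rw [Finset.sum_eq_single (σ.symm j)]
  · simp [Finsupp.single_apply]
  · intro i _ hi
    rw [Finsupp.single_apply, if_neg]
    intro h
    exact hi (by simp [← h])
  · simp

lemma prod_X_pow_eq (σ : Perm (Fin n)) (ν : Fin n → ℕ) :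
    (∏ i : Fin n, (X (σ i) : P n) ^ ν i) = monomial (D (ν ∘ ⇑σ.symm)) 1 := by
  simp only [X_pow_eq_monomial]
  rw [← monomial_sum_one, sum_single_eq_D]

lemma mAlt_eq (ν : Fin n → ℕ) :
    mAlt n ν = ∑ σ : Perm (Fin n), (Equiv.Perm.sign σ : ℤ) • monomial (D (ν ∘ ⇑σ.symm)) 1 := by
  unfold mAlt
  exact Finset.sum_congr rfl fun σ _ => by rw [prod_X_pow_eq]

lemma coeff_mAlt (ν : Fin n → ℕ) (d : Fin n →₀ ℕ) :
    coeff d (mAlt n ν) =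
      ∑ σ : Perm (Fin n), if D (ν ∘ ⇑σ.symm) = d then ((Equiv.Perm.sign σ : ℤ) : R) else 0 := by
  rw [mAlt_eq, ← MvPolynomial.lcoeff_apply, map_sum]
  apply Finset.sum_congr rfl
  intro σ _
  rw [map_zsmul, MvPolynomial.lcoeff_apply, coeff_monomial]
  split <;> simp


lemma perm_eq_one_of_strictMono (σ : Perm (Fin n)) (h : StrictMono ⇑σ) : σ = 1 := by
  have h1 : (h.orderIsoOfSurjective _ σ.surjective : Fin n → Fin n) = ⇑σ := rfl
  have h2 : h.orderIsoOfSurjective _ σ.surjective = OrderIso.refl _ := Subsingleton.elim _ _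
  ext i
  rw [← h1, h2]
  rfl

lemma comp_perm_eq_of_strictAnti {ν μ : Fin n → ℕ} (hν : StrictAnti ν) (hμ : StrictAnti μ)
    (σ : Perm (Fin n)) (h : ν ∘ ⇑σ.symm = μ) : σ = 1 ∧ ν = μ := by
  have hm : StrictMono ⇑σ.symm := by
    intro i j hij
    have hlt : ν (σ.symm j) < ν (σ.symm i) := by
      have := hμ hij
      rwa [← h] at this
    rcases lt_trichotomy (σ.symm i) (σ.symm j) with h' | h' | h'
    · exact h'
    · rw [h'] at hlt; exact absurd hlt (lt_irrefl _)
    · exact absurd (hν h') (not_lt.mpr (le_of_lt hlt))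
  have : σ.symm = 1 := perm_eq_one_of_strictMono _ hm
  have hσ : σ = 1 := by
    rw [← Equiv.symm_symm σ, this]; rfl
  refine ⟨hσ, ?_⟩
  rw [← h, hσ]
  funext i; rfl

lemma coeff_mAlt_SA {ν μ : Fin n → ℕ} (hν : StrictAnti ν) (hμ : StrictAnti μ) :
    coeff (D μ) (mAlt n ν) = if ν = μ then 1 else 0 := by
  rw [coeff_mAlt]
  rw [Finset.sum_eq_single (1 : Perm (Fin n))]
  · have h1 : ν ∘ ⇑(1 : Perm (Fin n)).symm = ν := rfl
    rw [h1, map_one]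
    by_cases h : ν = μ
    · rw [if_pos (by rw [h]), if_pos h]; simp
    · rw [if_neg (fun hd => h (D_injective hd)), if_neg h]
  · intro τ _ hτ
    rw [if_neg]
    intro hcond
    exact hτ (comp_perm_eq_of_strictAnti hν hμ τ (D_injective hcond)).1
  · simp

lemma coeff_mAlt_comp_perm {ν : Fin n → ℕ} (hν : Function.Injective ν) (σ : Perm (Fin n)) :
    coeff (D (ν ∘ ⇑σ)) (mAlt n ν) = ((Equiv.Perm.sign σ : ℤ) : R) := by
  rw [coeff_mAlt]
  rw [Finset.sum_eq_single σ⁻¹]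
  · rw [if_pos]
    · simp
    · congr 1
  · intro τ _ hτ
    rw [if_neg]
    intro hcond
    apply hτ
    have h1 : ν ∘ ⇑τ.symm = ν ∘ ⇑σ := D_injective hcond
    have h2 : ⇑τ.symm = ⇑σ := by
      funext i
      exact hν (congrFun h1 i)
    have : τ.symm = σ := Equiv.coe_fn_injective h2
    rw [← this]; rfl
  · simp

lemma coeff_mAlt_notin_orbit {ν : Fin n → ℕ} (d : Fin n →₀ ℕ)
    (h : ∀ σ : Perm (Fin n), d ≠ D (ν ∘ ⇑σ)) : coeff d (mAlt n ν) = 0 := by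
  rw [coeff_mAlt]
  apply Finset.sum_eq_zero
  intro τ _
  rw [if_neg]
  intro hcond
  exact h τ.symm hcond.symm



lemma D_coe (d : Fin n →₀ ℕ) : D ⇑d = d := Finsupp.equivFunOnFinite.symm_apply_apply d

lemma mapDomain_D (σ : Perm (Fin n)) (d : Fin n → ℕ) :
    Finsupp.mapDomain (⇑σ) (D d) = D (d ∘ ⇑σ.symm) := by
  ext j
  rw [Finsupp.mapDomain_equiv_apply]
  rfl

lemma coeff_comp_perm_of_isAlt {f : P n} (hf : IsAlt f) (d : Fin n → ℕ) (σ : Perm (Fin n)) :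
    coeff (D (d ∘ ⇑σ)) f = ((Equiv.Perm.sign σ : ℤ) : R) * coeff (D d) f := by
  have h1 := MvPolynomial.coeff_rename_mapDomain (⇑σ.symm) σ.symm.injective f (D d)
  rw [mapDomain_D, Equiv.symm_symm, hf σ.symm] at h1
  rw [MvPolynomial.coeff_smul, Equiv.Perm.sign_symm] at h1
  rcases Int.units_eq_one_or (Equiv.Perm.sign σ) with h | h <;>
    · rw [h] at h1 ⊢
      simp only [Units.val_one, Units.val_neg, Int.cast_one, Int.cast_neg, one_smul, neg_smul,
        one_mul, neg_mul, one_smul] at h1 ⊢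
      first
        | exact h1
        | linear_combination -h1

lemma injective_coe_of_mem_support {f : P n} (hf : IsAlt f) {d : Fin n →₀ ℕ}
    (hd : d ∈ f.support) : Function.Injective ⇑d := by
  intro i j hij
  by_contra hne
  have hswap : ⇑d ∘ ⇑(Equiv.swap i j) = ⇑d := by
    funext k
    rcases eq_or_ne k i with rfl | hki
    · simp [Equiv.swap_apply_left, hij]
    rcases eq_or_ne k j with rfl | hkj
    · simp [Equiv.swap_apply_right, hij]
    · simp [Function.comp, Equiv.swap_apply_of_ne_of_ne hki hkj]
  have h := coeff_comp_perm_of_isAlt hf (⇑d) (Equiv.swap i j)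
  rw [hswap, D_coe, Equiv.Perm.sign_swap hne] at h
  have h2 : (2 : R) * coeff d f = 0 := by
    simp only [Units.val_neg, Units.val_one, Int.cast_neg, Int.cast_one, neg_mul, one_mul] at h
    linear_combination h
  rcases mul_eq_zero.mp h2 with h' | h'
  · exact absurd h' two_ne_zero
  · exact mem_support_iff.mp hd h'

lemma exists_sort_strictAnti {d : Fin n → ℕ} (hd : Function.Injective d) :
    ∃ τ : Perm (Fin n), StrictAnti (d ∘ ⇑τ) := by
  refine ⟨(Fin.revPerm).trans (Tuple.sort d), ?_⟩
  have hmono : Monotone (d ∘ ⇑(Tuple.sort d)) := Tuple.monotone_sort d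
  have hinj : Function.Injective (d ∘ ⇑(Tuple.sort d)) := hd.comp (Equiv.injective _)
  have hsm : StrictMono (d ∘ ⇑(Tuple.sort d)) := hmono.strictMono_of_injective hinj
  have hrev : StrictAnti (Fin.rev : Fin n → Fin n) := fun i j h => Fin.rev_lt_rev.mpr h
  exact hsm.comp_strictAnti hrev

lemma isAlt_mem_span_mAlt_aux : ∀ (N : ℕ) (f : P n), f.support.card ≤ N → IsAlt f →
    f ∈ Submodule.span R (mAlt n '' {ν : Fin n → ℕ | StrictAnti ν}) := by
  intro N
  induction N with
  | zero =>
    intro f hcard hf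
    have : f = 0 := support_eq_empty.mp (Finset.card_eq_zero.mp (Nat.le_zero.mp hcard))
    rw [this]; exact Submodule.zero_mem _
  | succ N ih =>
    intro f hcard hf
    by_cases h0 : f = 0
    · rw [h0]; exact Submodule.zero_mem _
    obtain ⟨d, hd⟩ := Finset.nonempty_iff_ne_empty.mpr
      (fun h => h0 (support_eq_empty.mp h))
    have hdinj := injective_coe_of_mem_support hf hd
    obtain ⟨τ, hSA⟩ := exists_sort_strictAnti hdinj
    set ν : Fin n → ℕ := ⇑d ∘ ⇑τ with hν
    set c : R := coeff (D ν) f with hc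
    have hνinj : Function.Injective ν := hSA.injective
    have hid : ν ∘ ⇑τ.symm = ⇑d := by funext k; simp [hν]
    have hcd : coeff d f = ((Equiv.Perm.sign τ.symm : ℤ) : R) * c := by
      have h := coeff_comp_perm_of_isAlt hf ν τ.symm
      rw [hid, D_coe] at h
      exact h
    have hc0 : c ≠ 0 := by
      intro h
      exact mem_support_iff.mp hd (by rw [hcd, h, mul_zero])
    set g : P n := f - c • mAlt n ν with hg
    have hgAlt : IsAlt g := hf.sub (IsAlt.smul c (isAlt_mAlt ν))
    have hkey : ∀ e : Fin n →₀ ℕ, e ∈ g.support → e ∈ f.support ∧ e ≠ d := by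
      intro e he
      have hcoe : coeff e g ≠ 0 := mem_support_iff.mp he
      by_cases horb : ∃ σ : Equiv.Perm (Fin n), e = D (ν ∘ ⇑σ)
      · obtain ⟨σ, rfl⟩ := horb
        exfalso
        apply hcoe
        rw [hg, MvPolynomial.coeff_sub, MvPolynomial.coeff_smul,
          coeff_comp_perm_of_isAlt hf ν σ, coeff_mAlt_comp_perm hνinj σ, ← hc]
        rw [smul_eq_mul]
        ring
      · push_neg at horb
        have hz : coeff e (mAlt n ν) = 0 := coeff_mAlt_notin_orbit e horb
        have hef : coeff e g = coeff e f := by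
          rw [hg, MvPolynomial.coeff_sub, MvPolynomial.coeff_smul, hz, smul_zero, sub_zero]
        refine ⟨mem_support_iff.mpr (hef ▸ hcoe), ?_⟩
        rintro rfl
        apply horb τ.symm
        rw [hid, D_coe]
    have hsub : g.support ⊆ f.support.erase d := fun e he =>
      Finset.mem_erase.mpr ⟨(hkey e he).2, (hkey e he).1⟩
    have hcardg : g.support.card ≤ N := by
      have h1 := Finset.card_le_card hsub
      have h2 := Finset.card_erase_of_mem hd
      have h3 := Finset.card_pos.mpr ⟨d, hd⟩
      omega
    have hgmem := ih g hcardg hgAlt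
    have hfg : f = g + c • mAlt n ν := by rw [hg]; ring
    rw [hfg]
    exact Submodule.add_mem _ hgmem
      (Submodule.smul_mem _ _ (Submodule.subset_span ⟨ν, hSA, rfl⟩))

lemma isAlt_mem_span_mAlt {f : P n} (hf : IsAlt f) :
    f ∈ Submodule.span R (mAlt n '' {ν : Fin n → ℕ | StrictAnti ν}) :=
  isAlt_mem_span_mAlt_aux f.support.card f le_rfl hf

/-! ### one-variable polynomials and expansion of `aPoly` -/

/-- `pp k = (Y + t₁)⋯(Y + tₖ)` as a one-variable polynomial over `R`. -/
def pp (k : ℕ) : Polynomial R :=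
  ∏ j ∈ Finset.range k, (Polynomial.X + Polynomial.C (MvPolynomial.X j : R))

lemma pp_monic (k : ℕ) : (pp k).Monic := by
  apply Polynomial.monic_prod_of_monic
  intro j _
  exact Polynomial.monic_X_add_C _

lemma pp_natDegree (k : ℕ) : (pp k).natDegree = k := by
  rw [pp, Polynomial.natDegree_prod_of_monic _ _ (fun j _ => Polynomial.monic_X_add_C _)]
  simp

lemma aeval_pp (i : Fin n) (k : ℕ) : Polynomial.aeval (X i : P n) (pp k) = dm n i k := by
  rw [pp, map_prod, dm]
  apply Finset.prod_congr rfl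
  intro j _
  rw [map_add, Polynomial.aeval_X, Polynomial.aeval_C]
  rfl

/-- coefficients of `pp` -/
def cc (k l : ℕ) : R := (pp k).coeff l

lemma cc_self (k : ℕ) : cc k k = 1 := by
  have := (pp_monic k).coeff_natDegree
  rwa [pp_natDegree] at this

lemma dm_expand (i : Fin n) (k : ℕ) :
    dm n i k = ∑ l ∈ Finset.range (k + 1), cc k l • (X i : P n) ^ l := by
  rw [← aeval_pp, Polynomial.aeval_eq_sum_range, pp_natDegree]
  rfl

def degf (ν : Fin n → ℕ) : ℕ := ∑ i, ν i

lemma aPoly_expand (ν : Fin n → ℕ) :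
    aPoly n ν = ∑ μ ∈ Fintype.piFinset (fun i => Finset.range (ν i + 1)),
      (∏ i, cc (ν i) (μ i)) • mAlt n μ := by
  rw [aPoly_eq, altSum]
  have h1 : ∀ σ : Perm (Fin n), ∏ i : Fin n, dm n (σ i) (ν i)
      = ∑ μ ∈ Fintype.piFinset (fun i => Finset.range (ν i + 1)),
          (∏ i, cc (ν i) (μ i)) • ∏ i : Fin n, (X (σ i) : P n) ^ μ i := by
    intro σ
    calc ∏ i : Fin n, dm n (σ i) (ν i)
        = ∏ i : Fin n, ∑ l ∈ Finset.range (ν i + 1), cc (ν i) l • (X (σ i) : P n) ^ l := by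
          exact Finset.prod_congr rfl fun i _ => dm_expand (σ i) (ν i)
      _ = ∑ μ ∈ Fintype.piFinset (fun i => Finset.range (ν i + 1)),
            ∏ i : Fin n, cc (ν i) (μ i) • (X (σ i) : P n) ^ μ i :=
          Finset.prod_univ_sum _ _
      _ = _ := Finset.sum_congr rfl fun μ _ => by
            simp only [MvPolynomial.smul_eq_C_mul]
            rw [Finset.prod_mul_distrib, map_prod]
  calc (∑ σ : Perm (Fin n), (Equiv.Perm.sign σ : ℤ) • ∏ i : Fin n, dm n (σ i) (ν i))
      = ∑ σ : Perm (Fin n), ∑ μ ∈ Fintype.piFinset (fun i => Finset.range (ν i + 1)),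
          (∏ i, cc (ν i) (μ i)) • ((Equiv.Perm.sign σ : ℤ) • ∏ i : Fin n, (X (σ i) : P n) ^ μ i) := by
        apply Finset.sum_congr rfl
        intro σ _
        rw [h1 σ, Finset.smul_sum]
        exact Finset.sum_congr rfl fun μ _ => smul_comm _ _ _
    _ = _ := by
        rw [Finset.sum_comm]
        apply Finset.sum_congr rfl
        intro μ _
        rw [mAlt, altSum, Finset.smul_sum]

lemma mAlt_comp_perm (μ : Fin n → ℕ) (τ : Perm (Fin n)) :
    mAlt n (μ ∘ ⇑τ) = (Equiv.Perm.sign τ : ℤ) • mAlt n μ :=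
  altSum_comp_perm _ μ τ

lemma mAlt_mem_span_same_deg (μ : Fin n → ℕ) :
    mAlt n μ ∈ Submodule.span R
      (mAlt n '' {κ : Fin n → ℕ | StrictAnti κ ∧ degf κ = degf μ}) := by
  by_cases hinj : Function.Injective μ
  · obtain ⟨τ, hSA⟩ := exists_sort_strictAnti hinj
    have hdeg : degf (μ ∘ ⇑τ) = degf μ := Equiv.sum_comp τ μ
    have hmem : mAlt n (μ ∘ ⇑τ) ∈
        (mAlt n '' {κ : Fin n → ℕ | StrictAnti κ ∧ degf κ = degf μ}) := ⟨_, ⟨hSA, hdeg⟩, rfl⟩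
    have h := mAlt_comp_perm μ τ
    rcases Int.units_eq_one_or (Equiv.Perm.sign τ) with hs | hs <;> rw [hs] at h
    · simp only [Units.val_one, one_smul] at h
      rw [← h]
      exact Submodule.subset_span hmem
    · simp only [Units.val_neg, Units.val_one, neg_smul, one_smul] at h
      have : mAlt n μ = - mAlt n (μ ∘ ⇑τ) := by rw [h, neg_neg]
      rw [this]
      exact Submodule.neg_mem _ (Submodule.subset_span hmem)
  · rw [mAlt, altSum_eq_zero_of_not_injective _ _ hinj]
    exact Submodule.zero_mem _

lemma aPoly_sub_mAlt_mem (ν : Fin n → ℕ) :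
    aPoly n ν - mAlt n ν ∈ Submodule.span R
      (mAlt n '' {κ : Fin n → ℕ | StrictAnti κ ∧ degf κ < degf ν}) := by
  have hν : ν ∈ Fintype.piFinset (fun i : Fin n => Finset.range (ν i + 1)) := by
    rw [Fintype.mem_piFinset]; intro i; simp
  have hexp := aPoly_expand ν
  rw [← Finset.sum_erase_add _ _ hν] at hexp
  have hcc : (∏ i, cc (ν i) (ν i)) = 1 := by
    simp [cc_self]
  rw [hcc, one_smul] at hexp
  have : aPoly n ν - mAlt n ν
      = ∑ μ ∈ (Fintype.piFinset (fun i : Fin n => Finset.range (ν i + 1))).erase ν,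
          (∏ i, cc (ν i) (μ i)) • mAlt n μ := by
    rw [hexp]; ring
  rw [this]
  apply Submodule.sum_mem
  intro μ hμ
  apply Submodule.smul_mem
  have hμν : μ ≠ ν := (Finset.mem_erase.mp hμ).1
  have hμbox := Fintype.mem_piFinset.mp (Finset.mem_erase.mp hμ).2
  have hdeg : degf μ < degf ν := by
    have hle : ∀ i, μ i ≤ ν i := fun i => by
      have := hμbox i; rw [Finset.mem_range] at this; omega
    have hlt : ∃ i, μ i < ν i := by
      by_contra h
      push_neg at h
      exact hμν (funext fun i => le_antisymm (hle i) (h i))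
    obtain ⟨i₀, hi₀⟩ := hlt
    exact Finset.sum_lt_sum (fun i _ => hle i) ⟨i₀, Finset.mem_univ _, hi₀⟩
  have hmono : (mAlt n '' {κ : Fin n → ℕ | StrictAnti κ ∧ degf κ = degf μ}) ⊆
      (mAlt n '' {κ : Fin n → ℕ | StrictAnti κ ∧ degf κ < degf ν}) := by
    rintro x ⟨κ, ⟨h1, h2⟩, rfl⟩
    exact ⟨κ, ⟨h1, h2 ▸ hdeg⟩, rfl⟩
  exact Submodule.span_mono hmono (mAlt_mem_span_same_deg μ)

lemma coeff_eq_zero_of_mem_span {S : Set (P n)} {dd : Fin n →₀ ℕ}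
    (hS : ∀ x ∈ S, coeff dd x = 0) {y : P n} (hy : y ∈ Submodule.span R S) :
    coeff dd y = 0 := by
  have hle : Submodule.span R S ≤ LinearMap.ker (MvPolynomial.lcoeff R dd) := by
    rw [Submodule.span_le]
    intro x hx
    rw [SetLike.mem_coe, LinearMap.mem_ker, MvPolynomial.lcoeff_apply]
    exact hS x hx
  have hmem := hle hy
  rwa [LinearMap.mem_ker, MvPolynomial.lcoeff_apply] at hmem

lemma coeff_D_aPoly {ν μ : Fin n → ℕ} (hν : StrictAnti ν) (hμ : StrictAnti μ)
    (hdeg : degf ν ≤ degf μ) :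
    coeff (D μ) (aPoly n ν) = if ν = μ then 1 else 0 := by
  have herr : coeff (D μ) (aPoly n ν - mAlt n ν) = 0 := by
    apply coeff_eq_zero_of_mem_span _ (aPoly_sub_mAlt_mem ν)
    rintro x ⟨κ, ⟨hκSA, hκdeg⟩, rfl⟩
    rw [coeff_mAlt_SA hκSA hμ, if_neg]
    intro h
    rw [h] at hκdeg
    omega
  have h2 : coeff (D μ) (aPoly n ν) = coeff (D μ) (mAlt n ν) := by
    rw [MvPolynomial.coeff_sub] at herr
    linear_combination herr
  rw [h2, coeff_mAlt_SA hν hμ]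

abbrev SAIdx (n : ℕ) := {ν : Fin n → ℕ // StrictAnti ν}

lemma linIndep_aPoly :
    LinearIndependent R (fun ν : SAIdx n => aPoly n ν.1) := by
  rw [linearIndependent_iff']
  intro t
  induction t using Finset.strongInduction with
  | _ t ih =>
    intro g hsum i hi
    obtain ⟨ν₀, hν₀t, hmax⟩ := Finset.exists_max_image t (fun ν => degf ν.1) ⟨i, hi⟩
    have hg0 : g ν₀ = 0 := by
      have hco := congrArg (MvPolynomial.lcoeff R (D ν₀.1)) hsum
      rw [map_sum, map_zero] at hco
      simp only [map_smul, MvPolynomial.lcoeff_apply] at hco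
      rw [Finset.sum_eq_single ν₀] at hco
      · rw [coeff_D_aPoly ν₀.2 ν₀.2 le_rfl, if_pos rfl, smul_eq_mul, mul_one] at hco
        exact hco
      · intro ν hν hne
        rw [coeff_D_aPoly ν.2 ν₀.2 (hmax ν hν), if_neg (fun h => hne (Subtype.ext h)),
          smul_zero]
      · intro h
        exact absurd hν₀t h
    rcases eq_or_ne i ν₀ with rfl | hne
    · exact hg0
    · have hsum' : ∑ j ∈ t.erase ν₀, g j • aPoly n j.1 = 0 := by
        rw [← Finset.sum_erase_add t _ hν₀t, hg0, zero_smul, add_zero] at hsum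
        exact hsum
      exact ih (t.erase ν₀) (Finset.erase_ssubset hν₀t) g hsum' i
        (Finset.mem_erase.mpr ⟨hne, hi⟩)

lemma mAlt_mem_span_aPoly {ν : Fin n → ℕ} (hν : StrictAnti ν) :
    mAlt n ν ∈ Submodule.span R (Set.range (fun κ : SAIdx n => aPoly n κ.1)) := by
  generalize h : degf ν = B
  induction B using Nat.strong_induction_on generalizing ν with
  | _ B ih =>
    have hle : Submodule.span R (mAlt n '' {κ : Fin n → ℕ | StrictAnti κ ∧ degf κ < degf ν}) ≤
        Submodule.span R (Set.range (fun κ : SAIdx n => aPoly n κ.1)) := by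
      rw [Submodule.span_le]
      rintro x ⟨κ, ⟨hκSA, hκdeg⟩, rfl⟩
      rw [h] at hκdeg
      exact ih (degf κ) hκdeg hκSA rfl
    have heq : mAlt n ν = aPoly n ν - (aPoly n ν - mAlt n ν) := by ring
    rw [heq]
    exact Submodule.sub_mem _ (Submodule.subset_span ⟨⟨ν, hν⟩, rfl⟩)
      (hle (aPoly_sub_mAlt_mem ν))

lemma isAlt_mem_span_aPoly {f : P n} (hf : IsAlt f) :
    f ∈ Submodule.span R (Set.range (fun κ : SAIdx n => aPoly n κ.1)) := by
  have h1 := isAlt_mem_span_mAlt hf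
  have h2 : Submodule.span R (mAlt n '' {ν : Fin n → ℕ | StrictAnti ν}) ≤
      Submodule.span R (Set.range (fun κ : SAIdx n => aPoly n κ.1)) := by
    rw [Submodule.span_le]
    rintro x ⟨ν, hν, rfl⟩
    exact mAlt_mem_span_aPoly hν
  exact h2 h1

/-! ### Vandermonde -/

def vdm (n : ℕ) : P n := ∏ i : Fin n, ∏ j ∈ Finset.Ioi i, ((X j : P n) - X i)

def ppP (n : ℕ) (k : ℕ) : Polynomial (P n) :=
  ∏ j ∈ Finset.range k, (Polynomial.X + Polynomial.C (C (MvPolynomial.X j : R) : P n))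

lemma ppP_monic (k : ℕ) : (ppP n k).Monic :=
  Polynomial.monic_prod_of_monic _ _ (fun j _ => Polynomial.monic_X_add_C _)

lemma ppP_natDegree (k : ℕ) : (ppP n k).natDegree = k := by
  rw [ppP, Polynomial.natDegree_prod_of_monic _ _ (fun j _ => Polynomial.monic_X_add_C _)]
  simp

lemma eval_ppP (i : Fin n) (k : ℕ) : (ppP n k).eval (X i : P n) = dm n i k := by
  rw [ppP, Polynomial.eval_prod, dm]
  apply Finset.prod_congr rfl
  intro j _
  simp

lemma aPoly_id_eq_vdm : aPoly n (fun j : Fin n => (j : ℕ)) = vdm n := by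
  have h1 : aPoly n (fun j : Fin n => (j : ℕ))
      = (Matrix.of fun i j : Fin n => (ppP n (j : ℕ)).eval (X i : P n)).det := by
    rw [Matrix.det_apply, aPoly]
    apply Finset.sum_congr rfl
    intro σ _
    rw [Units.smul_def]
    congr 1
    apply Finset.prod_congr rfl
    intro i _
    rw [Matrix.of_apply, eval_ppP]
  rw [h1, ← Matrix.det_eval_matrixOfPolynomials_eq_det_vandermonde (fun i : Fin n => (X i : P n))
    (fun j => ppP n (j : ℕ)) (fun j => ppP_natDegree _) (fun j => ppP_monic _),
    Matrix.det_vandermonde]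
  rfl

lemma rho_eq : rho n = (fun j : Fin n => (j : ℕ)) ∘ ⇑(Fin.revPerm : Equiv.Perm (Fin n)) := by
  funext i
  simp only [Function.comp_apply, Fin.revPerm_apply, Fin.val_rev, rho]
  omega

lemma aPoly_rho_eq :
    aPoly n (rho n) = ((Equiv.Perm.sign (Fin.revPerm : Equiv.Perm (Fin n)) : ℤ)) • vdm n := by
  rw [rho_eq, aPoly_eq, altSum_comp_perm, ← aPoly_eq, aPoly_id_eq_vdm]

lemma X_sub_X_ne_zero {i j : Fin n} (hij : i ≠ j) : (X j : P n) - X i ≠ 0 := by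
  intro h
  exact hij (MvPolynomial.X_injective (sub_eq_zero.mp h)).symm

lemma vdm_ne_zero : vdm n ≠ 0 := by
  rw [vdm, Finset.prod_ne_zero_iff]
  intro i _
  rw [Finset.prod_ne_zero_iff]
  intro j hj
  exact X_sub_X_ne_zero (ne_of_lt (Finset.mem_Ioi.mp hj))

lemma aPoly_rho_ne_zero : aPoly n (rho n) ≠ 0 := by
  rw [aPoly_rho_eq]
  rcases Int.units_eq_one_or (Equiv.Perm.sign (Fin.revPerm : Equiv.Perm (Fin n))) with h | h <;>
    rw [h] <;> simp [vdm_ne_zero]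

/-! ### primality -/

lemma prime_X_sub_X {i j : Fin n} (hij : i ≠ j) : Prime ((X j : P n) - X i) := by
  cases n with
  | zero => exact Fin.elim0 i
  | succ m =>
    set τ : Equiv.Perm (Fin (m + 1)) := Equiv.swap 0 j with hτ
    have hτj : τ j = 0 := Equiv.swap_apply_right 0 j
    have hτi : τ i ≠ 0 := by
      intro h
      exact hij (τ.injective (h.trans hτj.symm))
    obtain ⟨i', hi'⟩ := Fin.eq_succ_of_ne_zero hτi
    set e := (MvPolynomial.renameEquiv R τ).trans (MvPolynomial.finSuccEquiv R m) with he
    have hval : e ((X j : P (m+1)) - X i) = Polynomial.X - Polynomial.C (X i') := by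
      rw [he]
      simp only [AlgEquiv.trans_apply, MvPolynomial.renameEquiv_apply, map_sub,
        MvPolynomial.rename_X, hτj, hi', MvPolynomial.finSuccEquiv_X_zero,
        MvPolynomial.finSuccEquiv_X_succ]
    have hp : Prime (Polynomial.X - Polynomial.C (X i' : MvPolynomial (Fin m) R)) :=
      Polynomial.prime_X_sub_C _
    have hpi : Prime (e ((X j : P (m+1)) - X i)) := hval ▸ hp
    exact (MulEquiv.prime_iff e).mp hpi

/-! ### divisibility -/

lemma X_sub_dvd_sub_aeval (u : Fin n → P n) (i : Fin n) (hu : ∀ k, k ≠ i → u k = X k)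
    (f : P n) : ((X i : P n) - u i) ∣ f - aeval u f := by
  induction f using MvPolynomial.induction_on with
  | C r => rw [aeval_C]; simp [algebraMap_eq]
  | add p q hp hq =>
    have : p + q - aeval u (p + q) = (p - aeval u p) + (q - aeval u q) := by
      rw [map_add]; ring
    rw [this]
    exact dvd_add hp hq
  | mul_X p k hp =>
    have hkey : p * X k - aeval u (p * X k)
        = (p - aeval u p) * X k + aeval u p * (X k - u k) := by
      rw [map_mul, aeval_X]; ring
    rw [hkey]
    apply dvd_add (hp.mul_right _)
    rcases eq_or_ne k i with rfl | hk
    · exact dvd_mul_left _ _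
    · rw [hu k hk, sub_self, mul_zero]
      exact dvd_zero _

lemma aeval_update_eq_zero_of_isAlt {f : P n} (hf : IsAlt f) {i j : Fin n} (hij : i ≠ j) :
    aeval (Function.update X i (X j : P n)) f = 0 := by
  set u : Fin n → P n := Function.update X i (X j : P n) with hu
  have hui : u i = X j := Function.update_self i (X j) X
  have huk : ∀ k, k ≠ i → u k = X k := fun k hk => Function.update_of_ne hk _ _
  have hcomp : u ∘ ⇑(Equiv.swap i j) = u := by
    funext k
    rcases eq_or_ne k i with rfl | hki
    · rw [Function.comp_apply, Equiv.swap_apply_left, huk j (Ne.symm hij), hui]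
    rcases eq_or_ne k j with rfl | hkj
    · rw [Function.comp_apply, Equiv.swap_apply_right, hui, huk k hki]
    · rw [Function.comp_apply, Equiv.swap_apply_of_ne_of_ne hki hkj]
  have h1 : aeval u (rename (⇑(Equiv.swap i j)) f) = aeval u f := by
    rw [MvPolynomial.aeval_rename, hcomp]
  rw [hf (Equiv.swap i j), Equiv.Perm.sign_swap hij] at h1
  simp only [Units.val_neg, Units.val_one, neg_smul, one_smul, map_neg] at h1
  have h2 : (2 : P n) * aeval u f = 0 := by linear_combination -h1
  rcases mul_eq_zero.mp h2 with h | h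
  · exact absurd h two_ne_zero
  · exact h

lemma X_sub_X_dvd_of_isAlt {f : P n} (hf : IsAlt f) {i j : Fin n} (hij : i ≠ j) :
    ((X j : P n) - X i) ∣ f := by
  have h1 := X_sub_dvd_sub_aeval (Function.update X i (X j : P n)) i
    (fun k hk => Function.update_of_ne hk _ _) f
  rw [aeval_update_eq_zero_of_isAlt hf hij, sub_zero, Function.update_self] at h1
  rw [← neg_dvd]
  have : -((X j : P n) - X i) = (X i : P n) - X j := by ring
  rw [this]
  exact h1

lemma prod_primes_dvd {ι : Type*} (s : Finset ι) (p : ι → P n) (z : P n)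
    (hp : ∀ a ∈ s, Prime (p a)) (hdvd : ∀ a ∈ s, p a ∣ z)
    (hnd : ∀ a ∈ s, ∀ b ∈ s, a ≠ b → ¬ (p a ∣ p b)) : (∏ a ∈ s, p a) ∣ z := by
  induction s using Finset.cons_induction generalizing z with
  | empty => simp
  | cons a s ha ih =>
    obtain ⟨w, rfl⟩ := hdvd a (Finset.mem_cons_self a s)
    rw [Finset.prod_cons]
    apply mul_dvd_mul_left
    refine ih w (fun b hb => hp b (Finset.mem_cons_of_mem hb)) ?_
      (fun b hb c hc hbc => hnd b (Finset.mem_cons_of_mem hb) c (Finset.mem_cons_of_mem hc) hbc)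
    intro b hb
    have hbdvd := hdvd b (Finset.mem_cons_of_mem hb)
    have hbprime := hp b (Finset.mem_cons_of_mem hb)
    rcases hbprime.dvd_or_dvd hbdvd with h | h
    · exact absurd h (hnd b (Finset.mem_cons_of_mem hb) a (Finset.mem_cons_self a s)
        (fun hba => ha (hba ▸ hb)))
    · exact h

lemma not_dvd_X_sub_X {i j k l : Fin n} (hij : i < j) (hkl : k < l)
    (hne : (i, j) ≠ (k, l)) : ¬ (((X j : P n) - X i) ∣ ((X l : P n) - X k)) := by
  intro hdvd
  obtain ⟨w, hw⟩ := hdvd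
  have h1 : aeval (Function.update X i (X j : P n)) ((X l : P n) - X k) = 0 := by
    rw [hw, map_mul, map_sub, aeval_X, aeval_X, Function.update_self,
      Function.update_of_ne (ne_of_gt hij), sub_self, zero_mul]
  rw [map_sub, aeval_X, aeval_X] at h1
  have h2 : Function.update X i (X j : P n) l = Function.update X i (X j : P n) k :=
    sub_eq_zero.mp h1
  have hlk : l ≠ k := ne_of_gt hkl
  by_cases hli : l = i <;> by_cases hki : k = i
  · exact hlk (hli.trans hki.symm)
  · rw [hli, Function.update_self, Function.update_of_ne hki] at h2
    have h3 : j = k := MvPolynomial.X_injective h2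
    rw [h3] at hij
    rw [hli] at hkl
    exact lt_irrefl i (hij.trans hkl)
  · rw [hki, Function.update_of_ne hli, Function.update_self] at h2
    have h3 : l = j := MvPolynomial.X_injective h2
    exact hne (by rw [hki, h3])
  · rw [Function.update_of_ne hli, Function.update_of_ne hki] at h2
    exact hlk (MvPolynomial.X_injective h2)

lemma vdm_dvd_of_isAlt {f : P n} (hf : IsAlt f) : vdm n ∣ f := by
  rw [vdm, Finset.prod_sigma' Finset.univ (fun i => Finset.Ioi i)
    (fun i j => (X j : P n) - X i)]
  apply prod_primes_dvd
  · rintro ⟨i, j⟩ hij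
    have : i < j := Finset.mem_Ioi.mp (Finset.mem_sigma.mp hij).2
    exact prime_X_sub_X (ne_of_lt this)
  · rintro ⟨i, j⟩ hij
    have : i < j := Finset.mem_Ioi.mp (Finset.mem_sigma.mp hij).2
    exact X_sub_X_dvd_of_isAlt hf (ne_of_lt this)
  · rintro ⟨i, j⟩ hij ⟨k, l⟩ hkl hne
    have h1 : i < j := Finset.mem_Ioi.mp (Finset.mem_sigma.mp hij).2
    have h2 : k < l := Finset.mem_Ioi.mp (Finset.mem_sigma.mp hkl).2
    apply not_dvd_X_sub_X h1 h2
    intro h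
    apply hne
    have h3 := (Prod.ext_iff.mp h).1
    have h4 := (Prod.ext_iff.mp h).2
    simp only at h3 h4
    subst h3
    subst h4
    rfl

/-! ### symmetric quotients -/

lemma symm_of_mul_aPoly_rho {s f : P n} (hf : IsAlt f) (hs : s * aPoly n (rho n) = f) :
    s.IsSymmetric := by
  intro σ
  have hV := isAlt_aPoly (n := n) (rho n) σ
  have h1 : rename ⇑σ s * ((Equiv.Perm.sign σ : ℤ) • aPoly n (rho n))
      = (Equiv.Perm.sign σ : ℤ) • f := by
    rw [← hV, ← map_mul, hs, hf σ]
  rcases Int.units_eq_one_or (Equiv.Perm.sign σ) with h | h <;> rw [h] at h1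
  · simp only [Units.val_one, Int.cast_one, one_smul] at h1
    rw [← hs] at h1
    exact mul_right_cancel₀ aPoly_rho_ne_zero h1
  · simp only [Units.val_neg, Units.val_one, Int.cast_neg, Int.cast_one, neg_smul,
      one_smul] at h1
    rw [← hs] at h1
    exact mul_right_cancel₀ (neg_ne_zero.mpr aPoly_rho_ne_zero)
      (by linear_combination h1)

lemma exists_symm_quot {f : P n} (hf : IsAlt f) :
    ∃ s : P n, s.IsSymmetric ∧ s * aPoly n (rho n) = f := by
  obtain ⟨w, hw⟩ := vdm_dvd_of_isAlt hf
  have hrho := aPoly_rho_eq (n := n)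
  rcases Int.units_eq_one_or (Equiv.Perm.sign (Fin.revPerm : Equiv.Perm (Fin n))) with h | h <;>
    rw [h] at hrho
  · simp only [Units.val_one, Int.cast_one, one_smul] at hrho
    have hmul : w * aPoly n (rho n) = f := by rw [hrho, mul_comm]; exact hw.symm
    exact ⟨w, symm_of_mul_aPoly_rho hf hmul, hmul⟩
  · simp only [Units.val_neg, Units.val_one, Int.cast_neg, Int.cast_one, neg_smul,
      one_smul] at hrho
    have hmul : (-w) * aPoly n (rho n) = f := by rw [hrho, hw]; ring
    exact ⟨-w, symm_of_mul_aPoly_rho hf hmul, hmul⟩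

/-! ### partitions vs strictly antitone tuples -/

lemma strictAnti_ge {ν : Fin n → ℕ} (hν : StrictAnti ν) :
    ∀ (d : ℕ) (i j : Fin n), (j : ℕ) = (i : ℕ) + d → ν j + d ≤ ν i := by
  intro d
  induction d with
  | zero =>
    intro i j h
    have : i = j := Fin.ext (by omega)
    subst this
    simp
  | succ d ih =>
    intro i j h
    have hd : (i : ℕ) + d < n := by have := j.isLt; omega
    have h1 := ih i ⟨(i : ℕ) + d, hd⟩ rfl
    have h2 : (⟨(i : ℕ) + d, hd⟩ : Fin n) < j := by rw [Fin.lt_def]; simp; omega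
    have h3 := hν h2
    omega

lemma rho_le_of_strictAnti {ν : Fin n → ℕ} (hν : StrictAnti ν) (i : Fin n) :
    rho n i ≤ ν i := by
  have hn : 0 < n := i.pos
  have hij : ((⟨n - 1, by omega⟩ : Fin n) : ℕ) = (i : ℕ) + (n - 1 - (i : ℕ)) := by
    have := i.isLt; simp; omega
  have h1 := strictAnti_ge hν (n - 1 - (i : ℕ)) i ⟨n - 1, by omega⟩ hij
  rw [rho]
  omega

lemma strictAnti_add_rho (lam : Fin n → ℕ) (hlam : Antitone lam) :
    StrictAnti (fun i => lam i + rho n i) := by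
  intro i j hij
  have h1 : lam j ≤ lam i := hlam (le_of_lt hij)
  have h2 : (i : ℕ) < (j : ℕ) := hij
  have h3 := j.isLt
  simp only [rho]
  omega

def toNu (n : ℕ) (lam : {lam : Fin n → ℕ // Antitone lam}) : SAIdx n :=
  ⟨fun i => lam.1 i + rho n i, strictAnti_add_rho lam.1 lam.2⟩

lemma toNu_inj : Function.Injective (toNu n) := by
  intro a b h
  apply Subtype.ext
  funext i
  have h1 := congrFun (congrArg Subtype.val h) i
  simp only [toNu] at h1
  omega

lemma toNu_surj : Function.Surjective (toNu n) := by
  rintro ⟨ν, hν⟩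
  have hanti : Antitone (fun i => ν i - rho n i) := by
    intro i j hij
    have hri := rho_le_of_strictAnti hν i
    have hrj := rho_le_of_strictAnti hν j
    have hle : (i : ℕ) ≤ (j : ℕ) := hij
    have hd : (j : ℕ) = (i : ℕ) + ((j : ℕ) - (i : ℕ)) := by omega
    have h1 := strictAnti_ge hν ((j : ℕ) - (i : ℕ)) i j hd
    have hjn := j.isLt
    simp only [rho] at *
    omega
  refine ⟨⟨fun i => ν i - rho n i, hanti⟩, ?_⟩
  apply Subtype.ext
  funext i
  have := rho_le_of_strictAnti hν i
  simp only [toNu]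
  omega

end Schur
open Schur

/-- for every partition `λ` with at most `n` parts (encoded as an
antitone tuple `λ : Fin n → ℕ`) there is a unique symmetric polynomial `s_λ`
with `s_λ · a_ρ = a_{λ+ρ}`; moreover the family `(s_λ)` is an `R`-basis of the
module of symmetric polynomials. -/
theorem stmt_4 (n : ℕ) (hn : 1 ≤ n) :
    (∀ lam : Fin n → ℕ, Antitone lam →
      ∃! s : P n, s.IsSymmetric ∧
        s * aPoly n (rho n) = aPoly n (fun i => lam i + rho n i)) ∧
    ∃ s : {lam : Fin n → ℕ // Antitone lam} → P n,
      (∀ lam, (s lam).IsSymmetric ∧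
        s lam * aPoly n (rho n) = aPoly n (fun i => lam.1 i + rho n i)) ∧
      LinearIndependent R s ∧
      Submodule.span R (Set.range s) = SymmSub n := by
  classical
  have hquot : ∀ ν : SAIdx n, ∃ s : P n, s.IsSymmetric ∧ s * aPoly n (rho n) = aPoly n ν.1 :=
    fun ν => exists_symm_quot (isAlt_aPoly ν.1)
  choose sF hsF1 hsF2 using hquot
  set s : {lam : Fin n → ℕ // Antitone lam} → P n := fun lam => sF (toNu n lam) with hs
  have hs_eq : ∀ lam : {lam : Fin n → ℕ // Antitone lam},
      s lam * aPoly n (rho n) = aPoly n (fun i => lam.1 i + rho n i) := by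
    intro lam
    exact hsF2 (toNu n lam)
  constructor
  · intro lam hlam
    refine ⟨s ⟨lam, hlam⟩, ⟨hsF1 _, hs_eq ⟨lam, hlam⟩⟩, ?_⟩
    rintro t ⟨ht1, ht2⟩
    apply mul_right_cancel₀ aPoly_rho_ne_zero
    rw [ht2, hs_eq ⟨lam, hlam⟩]
  · refine ⟨s, fun lam => ⟨hsF1 _, hs_eq lam⟩, ?_, ?_⟩
    · rw [linearIndependent_iff']
      intro t g hsum i hi
      have h0 : (∑ l ∈ t, g l • s l) * aPoly n (rho n) = 0 := by rw [hsum, zero_mul]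
      rw [Finset.sum_mul] at h0
      have h1 : ∑ l ∈ t, g l • aPoly n (toNu n l).1 = 0 := by
        rw [← h0]
        apply Finset.sum_congr rfl
        intro l _
        rw [smul_mul_assoc, hsF2]
      exact (linearIndependent_iff'.mp
        ((linIndep_aPoly (n := n)).comp (toNu n) toNu_inj)) t g h1 i hi
    · apply le_antisymm
      · rw [Submodule.span_le]
        rintro x ⟨lam, rfl⟩
        exact (Subalgebra.mem_toSubmodule _).mpr
          ((MvPolynomial.mem_symmetricSubalgebra _).mpr (hsF1 _))
      · intro f hf
        have hfs : MvPolynomial.IsSymmetric f :=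
          (MvPolynomial.mem_symmetricSubalgebra f).mp ((Subalgebra.mem_toSubmodule _).mp hf)
        have hAlt : IsAlt (f * aPoly n (rho n)) := IsAlt.symm_mul hfs (isAlt_aPoly _)
        have hmem := isAlt_mem_span_aPoly hAlt
        rw [Finsupp.mem_span_range_iff_exists_finsupp] at hmem
        obtain ⟨c, hc⟩ := hmem
        have hkey : f = c.sum fun ν a => a • sF ν := by
          apply mul_right_cancel₀ aPoly_rho_ne_zero
          rw [← hc, Finsupp.sum, Finsupp.sum, Finset.sum_mul]
          apply Finset.sum_congr rfl
          intro ν _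
          rw [smul_mul_assoc, hsF2]
        rw [hkey, Finsupp.sum]
        apply Submodule.sum_mem
        intro ν _
        apply Submodule.smul_mem
        obtain ⟨lam, hlam⟩ := toNu_surj ν
        rw [← hlam]
        exact Submodule.subset_span ⟨lam, rfl⟩

end
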